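/- arXiv:1010.3304 — 6 statements merged into one kernel-verified Lean document; each statement's English description precedes it below -/
import Mathlib

section
/- Fix l ≥ 0 and a vertex v of the tree at depth l (i.e., a fixed admissible sequence of length l, which is a vertex of T_n for every n ≥ l). Then the proportion of traffic through v satisfies p_n(v) → (1/β(l))·(2 − 1/β(l) − 1/β(l+1)) as n → ∞, where β(l) = k_1 k_2 ⋯ k_l (and β(0) = 1). -/
open Finset Filter

namespace TreeTraffic

/-- `beta k l = k 1 * k 2 * ⋯ * k l`, with `beta k 0 = 1`. -/
def beta (k : ℕ → ℕ) (l : ℕ) : ℕ := ∏ i ∈ Finset.range l, k (i + 1)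

/-- `Ncard k n = ∑_{l=0}^n beta k l`, the number of vertices of `T_n`. -/
def Ncard (k : ℕ → ℕ) (n : ℕ) : ℕ := ∑ l ∈ Finset.range (n + 1), beta k l

/-- The set of admissible sequences of length exactly `m`:
vertices at depth `m`, i.e. lists `[x_1, …, x_m]` with `x_i ∈ {1, …, k i}`. -/
def level (k : ℕ → ℕ) : ℕ → Finset (List ℕ)
  | 0 => {[]}
  | m + 1 => (level k m).biUnion (fun l => (Finset.Icc 1 (k (m + 1))).image (fun x => l ++ [x]))

/-- The vertex set of the truncated tree `T_n`: all admissible sequences of length `≤ n`. -/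
def T (k : ℕ → ℕ) (n : ℕ) : Finset (List ℕ) :=
  (Finset.range (n + 1)).biUnion (level k)

/-- Length of the longest common prefix of two lists. -/
def lcp : List ℕ → List ℕ → ℕ
  | a :: as, b :: bs => if a = b then lcp as bs + 1 else 0
  | _, _ => 0

/-- The graph distance between two vertices of the tree. -/
def treeDist (u w : List ℕ) : ℕ := (u.length - lcp u w) + (w.length - lcp u w)

/-- `v` lies on the (unique) geodesic path joining `u` and `w` in the tree. -/
def onPath (v u w : List ℕ) : Prop := treeDist u v + treeDist v w = treeDist u w

instance (v u w : List ℕ) : Decidable (onPath v u w) := by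
  unfold onPath; infer_instance

theorem lcp_nil_left (w : List ℕ) : lcp [] w = 0 := by cases w <;> rfl
theorem lcp_nil_right (u : List ℕ) : lcp u [] = 0 := by cases u <;> rfl

theorem lcp_comm (u w : List ℕ) : lcp u w = lcp w u := by
  induction u generalizing w with
  | nil => cases w <;> simp [lcp]
  | cons a as ih =>
    cases w with
    | nil => simp [lcp]
    | cons b bs =>
      by_cases h : a = b <;> simp [lcp, h, ih, eq_comm]

theorem lcp_le_length_left (u w : List ℕ) : lcp u w ≤ u.length := by
  induction u generalizing w with
  | nil => simp [lcp_nil_left]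
  | cons a as ih =>
    cases w with
    | nil => simp [lcp]
    | cons b bs =>
      by_cases h : a = b <;> simp [lcp, h]
      exact ih bs

theorem lcp_le_length_right (u w : List ℕ) : lcp u w ≤ w.length := by
  rw [lcp_comm]; exact lcp_le_length_left w u

theorem prefix_iff_le_lcp {v w : List ℕ} : v <+: w ↔ v.length ≤ lcp v w := by
  induction v generalizing w with
  | nil => simp [lcp_nil_left]
  | cons a as ih =>
    cases w with
    | nil => simp [lcp_nil_right]
    | cons b bs =>
      by_cases h : a = b
      · subst h; simp [lcp, List.cons_prefix_cons, ih]
      · simp [lcp, h, List.cons_prefix_cons]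

theorem lcp_eq_length_iff {v w : List ℕ} : lcp v w = v.length ↔ v <+: w := by
  rw [prefix_iff_le_lcp]
  constructor
  · omega
  · intro h; exact le_antisymm (lcp_le_length_left v w) h

theorem prefix_of_le_lcp {q a b : List ℕ} (hq : q <+: a) (h : q.length ≤ lcp a b) : q <+: b := by
  induction q generalizing a b with
  | nil => exact List.nil_prefix
  | cons c q' ih =>
    cases a with
    | nil => simp at hq
    | cons x a' =>
      obtain ⟨hx, hq'⟩ := List.cons_prefix_cons.1 hq
      subst hx
      cases b with
      | nil => simp [lcp_nil_right] at h
      | cons y b' =>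
        by_cases hy : c = y
        · subst hy
          simp only [lcp, if_pos rfl] at h
          exact List.cons_prefix_cons.2 ⟨rfl, ih hq' (by simpa using h)⟩
        · simp [lcp, hy] at h

theorem le_lcp_of_prefix {p u w : List ℕ} (hu : p <+: u) (hw : p <+: w) :
    p.length ≤ lcp u w := by
  induction p generalizing u w with
  | nil => simp
  | cons c p' ih =>
    cases u with
    | nil => simp at hu
    | cons x u' =>
      cases w with
      | nil => simp at hw
      | cons y w' =>
        obtain ⟨hx, hu'⟩ := List.cons_prefix_cons.1 hu
        obtain ⟨hy, hw'⟩ := List.cons_prefix_cons.1 hw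
        subst hx; subst hy
        simp only [lcp, if_pos rfl, List.length_cons]
        exact Nat.succ_le_succ (ih hu' hw')

theorem min_lcp_le (u v w : List ℕ) : min (lcp u v) (lcp v w) ≤ lcp u w := by
  induction v generalizing u w with
  | nil => simp [lcp_nil_left, lcp_nil_right]
  | cons b bs ih =>
    cases u with
    | nil => simp [lcp_nil_left]
    | cons a as =>
      cases w with
      | nil => simp [lcp_nil_right]
      | cons c cs =>
        by_cases hab : a = b
        · by_cases hbc : b = c
          · subst hab; subst hbc
            simp only [lcp, if_true]
            have := ih as cs
            omega
          · subst hab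
            simp [lcp, hbc]
        · simp [lcp, hab]

theorem lcp_eq_of_prefix {u v w : List ℕ} (hvw : v <+: w) (h : lcp u w ≤ v.length) :
    lcp u v = lcp u w := by
  induction u generalizing v w with
  | nil => simp [lcp_nil_left]
  | cons a as ih =>
    cases v with
    | nil =>
      simp only [List.length_nil, Nat.le_zero] at h
      simp [lcp_nil_right, h]
    | cons b v' =>
      cases w with
      | nil => simp at hvw
      | cons c w' =>
        obtain ⟨hb, hv'⟩ := List.cons_prefix_cons.1 hvw
        subst hb
        by_cases hab : a = b
        · subst hab
          simp only [lcp, if_true, List.length_cons] at h ⊢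
          rw [ih hv' (by omega)]
        · simp [lcp, hab]
theorem onPath_iff {v u w : List ℕ} :
    onPath v u w ↔ (v <+: u ∨ v <+: w) ∧ lcp u w ≤ v.length := by
  have h1 := lcp_le_length_left u v
  have h2 := lcp_le_length_right u v
  have h3 := lcp_le_length_left v w
  have h4 := lcp_le_length_right v w
  have h5 := lcp_le_length_left u w
  have h6 := lcp_le_length_right u w
  have hmin := min_lcp_le u v w
  constructor
  · intro hp
    unfold onPath treeDist at hp
    have key : v.length + lcp u w = lcp u v + lcp v w := by omega
    have hc : lcp u w ≤ v.length := by omega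
    refine ⟨?_, hc⟩
    rcases le_total (lcp u v) (lcp v w) with hle | hle
    · right
      have : lcp v w = v.length := by omega
      exact lcp_eq_length_iff.1 this
    · left
      have : lcp v u = v.length := by rw [lcp_comm]; omega
      exact lcp_eq_length_iff.1 this
  · rintro ⟨hpre, hc⟩
    unfold onPath treeDist
    rcases hpre with hvu | hvw
    · have hcu : lcp u v = v.length := by rw [lcp_comm]; exact lcp_eq_length_iff.2 hvu
      have hcw : lcp v w = lcp u w := by
        rw [lcp_comm v w, lcp_comm u w]
        exact lcp_eq_of_prefix hvu (by rw [lcp_comm]; exact hc)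
      omega
    · have hcw : lcp v w = v.length := lcp_eq_length_iff.2 hvw
      have hcu : lcp u v = lcp u w := lcp_eq_of_prefix hvw hc
      omega

theorem length_of_mem_level {k : ℕ → ℕ} {m : ℕ} {u : List ℕ} (h : u ∈ level k m) :
    u.length = m := by
  induction m generalizing u with
  | zero => simp [level] at h; simp [h]
  | succ m ih =>
    simp only [level, Finset.mem_biUnion, Finset.mem_image] at h
    obtain ⟨l, hl, x, _, rfl⟩ := h
    simp [ih hl]

theorem prefix_append_singleton_iff {v u : List ℕ} {x : ℕ} (h : v.length ≤ u.length) :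
    v <+: u ++ [x] ↔ v <+: u := by
  constructor
  · intro hp
    exact List.prefix_of_prefix_length_le hp (List.prefix_append u [x]) h
  · intro hp
    exact hp.trans (List.prefix_append u [x])

theorem card_filter_level (k : ℕ → ℕ) {l : ℕ} {v : List ℕ} (hv : v ∈ level k l) (j : ℕ) :
    ((level k (l + j)).filter (fun u => v <+: u)).card = ∏ i ∈ Finset.range j, k (l + i + 1) := by
  have hvl : v.length = l := length_of_mem_level hv
  induction j with
  | zero =>
    have : (level k (l + 0)).filter (fun u => v <+: u) = {v} := by
      ext u
      simp only [Finset.mem_filter, Finset.mem_singleton]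
      constructor
      · rintro ⟨hu, hp⟩
        exact (hp.eq_of_length (by rw [hvl, length_of_mem_level hu]; omega)).symm
      · rintro rfl
        exact ⟨hv, List.prefix_rfl⟩
    simp only [Nat.add_zero] at this
    simp [this]
  | succ j ih =>
    have hstep : (level k (l + j + 1)).filter (fun u => v <+: u)
        = ((level k (l + j)).filter (fun u => v <+: u)).biUnion
            (fun u => (Finset.Icc 1 (k (l + j + 1))).image (fun x => u ++ [x])) := by
      ext u'
      simp only [level, Finset.mem_filter, Finset.mem_biUnion, Finset.mem_image]
      constructor
      · rintro ⟨⟨u, hu, x, hx, rfl⟩, hp⟩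
        have hlen : v.length ≤ u.length := by rw [hvl, length_of_mem_level hu]; omega
        exact ⟨u, ⟨hu, (prefix_append_singleton_iff hlen).1 hp⟩, x, hx, rfl⟩
      · rintro ⟨u, ⟨hu, hp⟩, x, hx, rfl⟩
        exact ⟨⟨u, hu, x, hx, rfl⟩, hp.trans (List.prefix_append u [x])⟩
    rw [show l + (j + 1) = l + j + 1 by omega, hstep, Finset.card_biUnion, Finset.prod_range_succ]
    · rw [← ih]
      rw [Finset.sum_congr rfl (fun u _ => Finset.card_image_of_injective _
          (fun x y hxy => by simpa using List.append_inj_right hxy rfl))]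
      simp [Finset.sum_const, mul_comm]
    · intro u₁ h₁ u₂ h₂ hne
      simp only [Finset.disjoint_left, Finset.mem_image]
      rintro y ⟨x₁, _, rfl⟩ ⟨x₂, _, heq⟩
      exact hne ((List.append_inj' heq rfl).1).symm

theorem card_level (k : ℕ → ℕ) (m : ℕ) : (level k m).card = beta k m := by
  have h0 : ([] : List ℕ) ∈ level k 0 := by simp [level]
  have := card_filter_level k h0 m
  rw [Finset.filter_true_of_mem (fun u _ => List.nil_prefix)] at this
  simpa [beta, Nat.add_comm] using this

theorem beta_add (k : ℕ → ℕ) (l j : ℕ) :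
    beta k (l + j) = beta k l * ∏ i ∈ Finset.range j, k (l + i + 1) := by
  rw [beta, beta, Finset.prod_range_add]

theorem level_disjoint (k : ℕ → ℕ) {m₁ m₂ : ℕ} (h : m₁ ≠ m₂) :
    Disjoint (level k m₁) (level k m₂) := by
  simp only [Finset.disjoint_left]
  intro u h1 h2
  exact h ((length_of_mem_level h1).symm.trans (length_of_mem_level h2))

theorem card_T (k : ℕ → ℕ) (n : ℕ) : (T k n).card = Ncard k n := by
  rw [T, Finset.card_biUnion (fun m₁ _ m₂ _ h => level_disjoint k h)]
  exact Finset.sum_congr rfl (fun m _ => card_level k m)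

theorem card_filter_T (k : ℕ → ℕ) {l : ℕ} {v : List ℕ} (hv : v ∈ level k l) {n : ℕ}
    (hn : l ≤ n) :
    beta k l * ((T k n).filter (fun u => v <+: u)).card + ∑ m ∈ Finset.range l, beta k m
      = Ncard k n := by
  have hvl : v.length = l := length_of_mem_level hv
  have hT : ((T k n).filter (fun u => v <+: u)).card
      = ∑ m ∈ Finset.range (n + 1), ((level k m).filter (fun u => v <+: u)).card := by
    rw [T, Finset.filter_biUnion,
      Finset.card_biUnion (fun m₁ _ m₂ _ h => (level_disjoint k h).mono
        (Finset.filter_subset _ _) (Finset.filter_subset _ _))]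
  have hzero : ∀ m < l, ((level k m).filter (fun u => v <+: u)).card = 0 := by
    intro m hm
    rw [Finset.card_eq_zero, Finset.filter_eq_empty_iff]
    intro u hu hp
    have := hp.length_le
    rw [hvl, length_of_mem_level hu] at this
    omega
  have hsplit : n + 1 = l + (n + 1 - l) := by omega
  rw [hT, Finset.mul_sum, hsplit, Finset.sum_range_add]
  have e1 : ∑ i ∈ Finset.range l, beta k l * ((level k i).filter (fun u => v <+: u)).card = 0 :=
    Finset.sum_eq_zero (fun i hi => by rw [hzero i (Finset.mem_range.1 hi)]; ring)
  have e2 : ∀ i ∈ Finset.range (n + 1 - l),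
      beta k l * ((level k (l + i)).filter (fun u => v <+: u)).card = beta k (l + i) := by
    intro i _
    rw [card_filter_level k hv i, ← beta_add]
  rw [e1, Finset.sum_congr rfl e2, Ncard, hsplit, Finset.sum_range_add]
  have : l + (n + 1 - l) - l = n + 1 - l := by omega
  rw [this]
  ring

theorem mem_level_append {k : ℕ → ℕ} {l : ℕ} {v : List ℕ} (hv : v ∈ level k l) {x : ℕ}
    (hx : x ∈ Finset.Icc 1 (k (l + 1))) : v ++ [x] ∈ level k (l + 1) := by
  simp only [level, Finset.mem_biUnion, Finset.mem_image]
  exact ⟨v, hv, x, hx, rfl⟩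

theorem exists_extension {k : ℕ → ℕ} {m : ℕ} {u p : List ℕ} (hu : u ∈ level k m)
    (hp : p <+: u) (hlen : p.length < m) :
    ∃ x ∈ Finset.Icc 1 (k (p.length + 1)), p ++ [x] <+: u := by
  induction m generalizing u with
  | zero => omega
  | succ m ih =>
    simp only [level, Finset.mem_biUnion, Finset.mem_image] at hu
    obtain ⟨u', hu', y, hy, rfl⟩ := hu
    have hlu' : u'.length = m := length_of_mem_level hu'
    rcases Nat.lt_or_ge p.length m with hlt | hge
    · have hpu' : p <+: u' := (prefix_append_singleton_iff (by omega)).1 hp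
      obtain ⟨x, hx, hpx⟩ := ih hu' hpu' hlt
      exact ⟨x, hx, hpx.trans (List.prefix_append u' [y])⟩
    · have hpl : p.length = m := by
        have := hp.length_le
        simp at this
        omega
      have hpu' : p = u' :=
        ((prefix_append_singleton_iff (by omega)).1 hp).eq_of_length (by omega)
      subst hpu'
      rw [hpl]
      exact ⟨y, hy, List.prefix_rfl⟩


/-- The traffic through `v` in `T_n`: the number of unordered pairs `{u, w}` of distinct
vertices of `T_n` such that `v` lies on the unique path joining `u` and `w`. -/
def traffic (k : ℕ → ℕ) (n : ℕ) (v : List ℕ) : ℕ :=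
  (((T k n).powersetCard 2).filter
    (fun s => ∃ u ∈ s, ∃ w ∈ s, u ≠ w ∧ onPath v u w)).card

theorem onPath_comm {v u w : List ℕ} : onPath v u w ↔ onPath v w u := by
  rw [onPath_iff, onPath_iff, lcp_comm, or_comm]

theorem not_onPath_iff {l : ℕ} {k : ℕ → ℕ} {v : List ℕ} (hv : v ∈ level k l) {n : ℕ}
    {a b : List ℕ} (ha : a ∈ T k n) :
    ¬ onPath v a b ↔ (¬ v <+: a ∧ ¬ v <+: b) ∨
      ∃ x ∈ Finset.Icc 1 (k (l + 1)), (v ++ [x]) <+: a ∧ (v ++ [x]) <+: b := by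
  have hvl : v.length = l := length_of_mem_level hv
  rw [onPath_iff]
  push_neg
  constructor
  · intro h
    by_cases hva : v <+: a
    · have hlcp := h (Or.inl hva)
      have hla : v.length < a.length := lt_of_lt_of_le hlcp (lcp_le_length_left a b)
      simp only [T, Finset.mem_biUnion, Finset.mem_range] at ha
      obtain ⟨m, _, hamem⟩ := ha
      have hlam : a.length = m := length_of_mem_level hamem
      obtain ⟨x, hx, hxa⟩ := exists_extension hamem hva (by omega)
      have hxb : (v ++ [x]) <+: b := prefix_of_le_lcp hxa (by simp; omega)
      exact Or.inr ⟨x, by rwa [hvl] at hx, hxa, hxb⟩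
    · by_cases hvb : v <+: b
      · have hlcp := h (Or.inr hvb)
        exact absurd (prefix_of_le_lcp hvb (by rw [lcp_comm]; omega)) hva
      · exact Or.inl ⟨hva, hvb⟩
  · rintro (⟨hna, hnb⟩ | ⟨x, hx, hxa, hxb⟩)
    · intro hor; rcases hor with h | h
      · exact absurd h hna
      · exact absurd h hnb
    · intro _
      have hle := le_lcp_of_prefix hxa hxb
      simp only [List.length_append, List.length_singleton] at hle
      omega
theorem traffic_eq (k : ℕ → ℕ) {l : ℕ} {v : List ℕ} (hv : v ∈ level k l) (n : ℕ) :
    traffic k n v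
      + (((T k n).filter (fun u => ¬ v <+: u)).card.choose 2)
      + ∑ x ∈ Finset.Icc 1 (k (l + 1)),
          (((T k n).filter (fun u => (v ++ [x]) <+: u)).card.choose 2)
      = (Ncard k n).choose 2 := by
  have hvl : v.length = l := length_of_mem_level hv
  set A : Finset (List ℕ) := (T k n).filter (fun u => ¬ v <+: u) with hA
  set B : ℕ → Finset (List ℕ) := fun x => (T k n).filter (fun u => (v ++ [x]) <+: u) with hB
  set P := (T k n).powersetCard 2 with hP
  set pred : Finset (List ℕ) → Prop := fun s => ∃ u ∈ s, ∃ w ∈ s, u ≠ w ∧ onPath v u w with hpred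
  have hBsubv : ∀ x : ℕ, ∀ u ∈ B x, v <+: u := by
    intro x u hu
    rw [hB, Finset.mem_filter] at hu
    exact (List.prefix_append v [x]).trans hu.2
  have hset : P.filter (fun s => ¬ pred s)
      = A.powersetCard 2 ∪ (Finset.Icc 1 (k (l + 1))).biUnion (fun x => (B x).powersetCard 2) := by
    ext s
    simp only [Finset.mem_filter, Finset.mem_union, Finset.mem_biUnion,
      Finset.mem_powersetCard, hP]
    constructor
    · rintro ⟨⟨hsub, hcard⟩, hnp⟩
      obtain ⟨a, b, hab, rfl⟩ := Finset.card_eq_two.1 hcard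
      have haT : a ∈ T k n := hsub (by simp)
      have hbT : b ∈ T k n := hsub (by simp)
      have hnab : ¬ onPath v a b := by
        intro hp
        exact hnp ⟨a, by simp, b, by simp, hab, hp⟩
      rcases (not_onPath_iff hv haT).1 hnab with ⟨hna, hnb⟩ | ⟨x, hx, hxa, hxb⟩
      · left
        refine ⟨?_, hcard⟩
        intro u hu
        rcases Finset.mem_insert.1 hu with rfl | hu
        · exact Finset.mem_filter.2 ⟨haT, hna⟩
        · rw [Finset.mem_singleton] at hu; subst hu
          exact Finset.mem_filter.2 ⟨hbT, hnb⟩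
      · right
        refine ⟨x, hx, ?_, hcard⟩
        intro u hu
        rcases Finset.mem_insert.1 hu with rfl | hu
        · exact Finset.mem_filter.2 ⟨haT, hxa⟩
        · rw [Finset.mem_singleton] at hu; subst hu
          exact Finset.mem_filter.2 ⟨hbT, hxb⟩
    · rintro (⟨hsub, hcard⟩ | ⟨x, hx, hsub, hcard⟩)
      · refine ⟨⟨hsub.trans (Finset.filter_subset _ _), hcard⟩, ?_⟩
        rintro ⟨u, hu, w, hw, hne, hp⟩
        have hu' := Finset.mem_filter.1 (hsub hu)
        have hw' := Finset.mem_filter.1 (hsub hw)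
        rcases (onPath_iff.1 hp).1 with h | h
        · exact hu'.2 h
        · exact hw'.2 h
      · refine ⟨⟨hsub.trans (Finset.filter_subset _ _), hcard⟩, ?_⟩
        rintro ⟨u, hu, w, hw, hne, hp⟩
        have hu' := Finset.mem_filter.1 (hsub hu)
        have hw' := Finset.mem_filter.1 (hsub hw)
        have hle := le_lcp_of_prefix hu'.2 hw'.2
        simp only [List.length_append, List.length_singleton] at hle
        have := (onPath_iff.1 hp).2
        omega
  have hdisj : Disjoint (A.powersetCard 2)
      ((Finset.Icc 1 (k (l + 1))).biUnion (fun x => (B x).powersetCard 2)) := by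
    rw [Finset.disjoint_left]
    intro s hsA hsB
    rw [Finset.mem_powersetCard] at hsA
    rw [Finset.mem_biUnion] at hsB
    obtain ⟨x, _, hsx⟩ := hsB
    rw [Finset.mem_powersetCard] at hsx
    obtain ⟨u, hu⟩ := Finset.card_pos.1 (by omega : 0 < s.card)
    have h1 := Finset.mem_filter.1 (hsA.1 hu)
    exact h1.2 (hBsubv x u (hsx.1 hu))
  have hpair : ∀ x ∈ Finset.Icc 1 (k (l + 1)), ∀ y ∈ Finset.Icc 1 (k (l + 1)), x ≠ y →
      Disjoint ((B x).powersetCard 2) ((B y).powersetCard 2) := by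
    intro x _ y _ hxy
    rw [Finset.disjoint_left]
    intro s hsx hsy
    rw [Finset.mem_powersetCard] at hsx hsy
    obtain ⟨u, hu⟩ := Finset.card_pos.1 (by omega : 0 < s.card)
    have h1 := (Finset.mem_filter.1 (hsx.1 hu)).2
    have h2 := (Finset.mem_filter.1 (hsy.1 hu)).2
    have := (List.prefix_of_prefix_length_le h1 h2 (by simp)).eq_of_length (by simp)
    exact hxy (by simpa using this)
  have hcount : (P.filter pred).card + (P.filter (fun s => ¬ pred s)).card = P.card :=
    Finset.card_filter_add_card_filter_not pred
  have hPcard : P.card = (Ncard k n).choose 2 := by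
    rw [hP, Finset.card_powersetCard, card_T]
  have hunion : (P.filter (fun s => ¬ pred s)).card
      = A.card.choose 2 + ∑ x ∈ Finset.Icc 1 (k (l + 1)), (B x).card.choose 2 := by
    rw [hset, Finset.card_union_of_disjoint hdisj, Finset.card_biUnion hpair,
      Finset.card_powersetCard]
    congr 1
    exact Finset.sum_congr rfl (fun x _ => Finset.card_powersetCard 2 (B x))
  have htr : traffic k n v = (P.filter pred).card := rfl
  have hgoal : ∑ x ∈ Finset.Icc 1 (k (l + 1)),
      ((T k n).filter (fun u => (v ++ [x]) <+: u)).card.choose 2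
      = ∑ x ∈ Finset.Icc 1 (k (l + 1)), (B x).card.choose 2 := rfl
  rw [hgoal]
  omega

theorem one_le_beta {k : ℕ → ℕ} (hk : ∀ i, 1 ≤ k i) (l : ℕ) : 1 ≤ beta k l :=
  Finset.one_le_prod' (fun i _ => hk (i + 1))

theorem le_Ncard {k : ℕ → ℕ} (hk : ∀ i, 1 ≤ k i) (n : ℕ) : n + 1 ≤ Ncard k n := by
  calc n + 1 = ∑ _m ∈ Finset.range (n + 1), 1 := by simp
  _ ≤ Ncard k n := Finset.sum_le_sum (fun i _ => one_le_beta hk i)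

theorem quad_div_tendsto (p q r : ℝ) :
    Tendsto (fun t : ℝ => (p * t + q) * (p * t + r) / (t * (t - 1))) atTop (nhds (p * p)) := by
  have hinv : Tendsto (fun t : ℝ => 1 / t) atTop (nhds 0) := by
    simpa using tendsto_inv_atTop_zero
  have hq : Tendsto (fun t : ℝ => q / t) atTop (nhds 0) := by
    simpa [div_eq_mul_inv] using tendsto_inv_atTop_zero.const_mul q
  have hr : Tendsto (fun t : ℝ => r / t) atTop (nhds 0) := by
    simpa [div_eq_mul_inv] using tendsto_inv_atTop_zero.const_mul r
  have h0 : Tendsto (fun t : ℝ => (p + q / t) * (p + r / t) / (1 - 1 / t)) atTop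
      (nhds ((p + 0) * (p + 0) / (1 - 0))) :=
    Tendsto.div ((tendsto_const_nhds.add hq).mul (tendsto_const_nhds.add hr))
      (tendsto_const_nhds.sub hinv) (by norm_num)
  have heq : (fun t : ℝ => (p + q / t) * (p + r / t) / (1 - 1 / t))
      =ᶠ[atTop] (fun t : ℝ => (p * t + q) * (p * t + r) / (t * (t - 1))) := by
    filter_upwards [eventually_ge_atTop (2 : ℝ)] with t ht
    have h1 : t ≠ 0 := by positivity
    have h2 : t - 1 ≠ 0 := by intro h; rw [sub_eq_zero] at h; linarith
    field_simp
  simpa using Tendsto.congr' heq h0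

/-- The proportion of the traffic of `T_n` passing through `v`:
`p_n(v) = l_n(v) / (N (N - 1) / 2)`. -/
noncomputable def trafficProp (k : ℕ → ℕ) (n : ℕ) (v : List ℕ) : ℝ :=
  (traffic k n v : ℝ) / ((Ncard k n : ℝ) * ((Ncard k n : ℝ) - 1) / 2)

/-- For a vertex `v` at depth `l`, the proportion of traffic through `v` converges to
`(1/β(l)) (2 - 1/β(l) - 1/β(l+1))` as `n → ∞`. -/
theorem traffic_prop_tendsto (k : ℕ → ℕ) (hk : ∀ i, 1 ≤ k i) (l : ℕ) (v : List ℕ)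
    (hv : v ∈ level k l) :
    Tendsto (fun n => trafficProp k n v) atTop
      (nhds ((1 / (beta k l : ℝ)) *
        (2 - 1 / (beta k l : ℝ) - 1 / (beta k (l + 1) : ℝ)))) := by
  have hbl : 0 < beta k l := one_le_beta hk l
  have hbl1 : 0 < beta k (l + 1) := one_le_beta hk (l + 1)
  have hblR : (beta k l : ℝ) ≠ 0 := (Nat.cast_pos.2 hbl).ne'
  have hbl1R : (beta k (l + 1) : ℝ) ≠ 0 := (Nat.cast_pos.2 hbl1).ne'
  have hkR : (k (l + 1) : ℝ) ≠ 0 := (Nat.cast_pos.2 (hk (l + 1))).ne'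
  set a : ℝ := 1 / (beta k l : ℝ) with ha
  set b : ℝ := 1 / (beta k (l + 1) : ℝ) with hb
  set K : ℝ := (k (l + 1) : ℝ) with hKdef
  set C : ℝ := ((∑ m ∈ Finset.range l, beta k m : ℕ) : ℝ) with hC
  set C' : ℝ := ((∑ m ∈ Finset.range (l + 1), beta k m : ℕ) : ℝ) with hC'
  have hNat : Tendsto (Ncard k) atTop atTop :=
    tendsto_atTop_mono (fun n => by simp only [id_eq]; have := le_Ncard hk n; omega) tendsto_id
  have hN : Tendsto (fun n => (Ncard k n : ℝ)) atTop atTop :=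
    tendsto_natCast_atTop_atTop.comp hNat
  have hq1 := quad_div_tendsto (1 - a) (a * C) (a * C - 1)
  have hq2 := quad_div_tendsto b (-(b * C')) (-(b * C') - 1)
  have hG : Tendsto (fun t : ℝ =>
      1 - ((1 - a) * t + a * C) * ((1 - a) * t + (a * C - 1)) / (t * (t - 1))
        - K * ((b * t + -(b * C')) * (b * t + (-(b * C') - 1)) / (t * (t - 1)))) atTop
      (nhds (1 - (1 - a) * (1 - a) - K * (b * b))) :=
    (tendsto_const_nhds.sub hq1).sub (hq2.const_mul K)
  have hcomp := hG.comp hN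
  have hbeta_succ : (beta k (l + 1) : ℝ) = (beta k l : ℝ) * K := by
    rw [hKdef]
    rw [show beta k (l + 1) = beta k l * k (l + 1) from Finset.prod_range_succ _ _]
    push_cast; ring
  have hval : 1 - (1 - a) * (1 - a) - K * (b * b)
      = (1 / (beta k l : ℝ)) * (2 - 1 / (beta k l : ℝ) - 1 / (beta k (l + 1) : ℝ)) := by
    rw [ha, hb, hbeta_succ]
    field_simp
    ring
  rw [← hval]
  refine Tendsto.congr' ?_ hcomp
  filter_upwards [eventually_ge_atTop (l + 1)] with n hn
  simp only [Function.comp_apply]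
  have hNn2 : 2 ≤ Ncard k n := le_trans (by omega) (le_Ncard hk n)
  set X : ℝ := (Ncard k n : ℝ) with hX
  have hX2 : (2 : ℝ) ≤ X := by rw [hX]; exact_mod_cast hNn2
  have hX0 : X ≠ 0 := by linarith
  have hX1 : X - 1 ≠ 0 := by intro h; rw [sub_eq_zero] at h; linarith
  have hADsum : ((T k n).filter (fun u => v <+: u)).card
      + ((T k n).filter (fun u => ¬ v <+: u)).card = Ncard k n := by
    rw [← card_T k n]
    exact Finset.card_filter_add_card_filter_not _
  have hD := card_filter_T k hv (by omega : l ≤ n)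
  set Dr : ℝ := (((T k n).filter (fun u => v <+: u)).card : ℝ) with hDr
  set Y : ℝ := ((((T k n)).filter (fun u => ¬ v <+: u)).card : ℝ) with hY
  have hDrX : (beta k l : ℝ) * Dr + C = X := by
    rw [hDr, hC, hX]; exact_mod_cast hD
  have hYX : Dr + Y = X := by
    rw [hDr, hY, hX]; exact_mod_cast hADsum
  have hYval : Y = (1 - a) * X + a * C := by
    have h1 : (beta k l : ℝ) * (X - Y) + C = X := by
      have h2 : X - Y = Dr := by linarith
      rw [h2]; exact hDrX
    rw [ha]
    field_simp
    nlinarith [h1]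
  have hBcard : ∀ x ∈ Finset.Icc 1 (k (l + 1)),
      ((((T k n).filter (fun u => (v ++ [x]) <+: u)).card : ℝ)) = b * (X - C') := by
    intro x hx
    have h2 := card_filter_T k (mem_level_append hv hx) (by omega : l + 1 ≤ n)
    have h2R : (beta k (l + 1) : ℝ)
        * (((T k n).filter (fun u => (v ++ [x]) <+: u)).card : ℝ) + C' = X := by
      rw [hC', hX]; exact_mod_cast h2
    rw [hb]
    field_simp
    linarith
  have hte := traffic_eq k hv n
  have hteR : (traffic k n v : ℝ) + Y * (Y - 1) / 2
      + ∑ x ∈ Finset.Icc 1 (k (l + 1)),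
          ((((T k n).filter (fun u => (v ++ [x]) <+: u)).card : ℝ)
            * ((((T k n).filter (fun u => (v ++ [x]) <+: u)).card : ℝ) - 1) / 2)
      = X * (X - 1) / 2 := by
    have hcast := congrArg (fun m : ℕ => (m : ℝ)) hte
    push_cast [Nat.cast_choose_two] at hcast
    convert hcast using 2 <;> rw [hY, hX]
  have hsum : ∑ x ∈ Finset.Icc 1 (k (l + 1)),
          ((((T k n).filter (fun u => (v ++ [x]) <+: u)).card : ℝ)
            * ((((T k n).filter (fun u => (v ++ [x]) <+: u)).card : ℝ) - 1) / 2)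
      = K * ((b * (X - C')) * ((b * (X - C')) - 1) / 2) := by
    rw [Finset.sum_congr rfl (fun x hx => by rw [hBcard x hx])]
    rw [Finset.sum_const, Nat.card_Icc, hKdef]
    simp [nsmul_eq_mul]
  have htraffic : (traffic k n v : ℝ)
      = X * (X - 1) / 2 - Y * (Y - 1) / 2
        - K * ((b * (X - C')) * ((b * (X - C')) - 1) / 2) := by
    rw [hsum] at hteR; linarith
  rw [trafficProp, htraffic, ← hX]
  rw [show (1 - a) * X + (a * C - 1) = Y - 1 by rw [hYval]; ring, ← hYval]
  rw [show b * X + -(b * C') = b * (X - C') by ring,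
    show b * X + (-(b * C') - 1) = b * (X - C') - 1 by ring]
  field_simp


end TreeTraffic
end

section
/- Let G be a finite tree on N vertices and let v be a vertex of G. Let s_1, …, s_m be the cardinalities of the connected components of the subgraph of G induced on the complement of {v}. Then the number of unordered pairs {u,w} of distinct vertices of G such that v lies on the unique path from u to w (pairs with u = v or w = v included) equals ∑_{i<j} s_i s_j + (N−1), where ∑_{i<j} s_i s_j = ((N−1)² − ∑_i s_i²)/2. -/
open Finset

lemma walk_toInduce {V : Type*} {G : SimpleGraph V} {s : Set V} :
    ∀ {a b : V} (w : G.Walk a b) (hw : ∀ x ∈ w.support, x ∈ s),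
      (G.induce s).Reachable ⟨a, hw a w.start_mem_support⟩ ⟨b, hw b w.end_mem_support⟩ := by
  intro a b w
  induction w with
  | nil => intro hw; rfl
  | cons h p ih =>
    intro hw
    refine (SimpleGraph.Adj.reachable ?_).trans (ih fun x hx => hw x (by simp [hx]))
    exact h

lemma reach_of_induce {V : Type*} [DecidableEq V] {G : SimpleGraph V} {v : V} {a b : ({v}ᶜ : Set V)}
    (h : (G.induce ({v}ᶜ : Set V)).Reachable a b) :
    ∃ q : G.Path (a : V) (b : V), v ∉ q.val.support := by
  obtain ⟨w⟩ := h
  let w' : G.Walk (a : V) (b : V) := w.map (SimpleGraph.Embedding.induce ({v}ᶜ : Set V)).toHom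
  refine ⟨w'.toPath, fun hv => ?_⟩
  have := w'.support_toPath_subset hv
  have this : v ∈ (w.map (SimpleGraph.Embedding.induce ({v}ᶜ : Set V)).toHom).support := this
  rw [SimpleGraph.Walk.support_map] at this
  obtain ⟨x, _, hx⟩ := List.mem_map.mp this
  exact x.2 hx

lemma sq_sum_aux {m : ℕ} (s : Fin m → ℕ) :
    (∑ i : Fin m, s i) ^ 2 =
      (∑ i : Fin m, s i ^ 2) +
        2 * ∑ p ∈ Finset.univ.filter (fun p : Fin m × Fin m => p.1 < p.2), s p.1 * s p.2 := by
  have h1 : (∑ i : Fin m, s i) ^ 2 = ∑ p : Fin m × Fin m, s p.1 * s p.2 := by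
    rw [sq, Finset.sum_mul_sum, ← Finset.univ_product_univ, Finset.sum_product]
  rw [h1, ← Finset.sum_filter_add_sum_filter_not Finset.univ (fun p : Fin m × Fin m => p.1 < p.2)]
  have h2 : Finset.univ.filter (fun p : Fin m × Fin m => ¬ p.1 < p.2) =
      Finset.univ.filter (fun p : Fin m × Fin m => p.1 = p.2) ∪
      Finset.univ.filter (fun p : Fin m × Fin m => p.2 < p.1) := by
    ext p
    simp only [mem_filter, mem_union, mem_univ, true_and]
    omega
  have h3 : Disjoint (Finset.univ.filter (fun p : Fin m × Fin m => p.1 = p.2))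
      (Finset.univ.filter (fun p : Fin m × Fin m => p.2 < p.1)) := by
    rw [Finset.disjoint_left]
    intro p hp1 hp2
    simp only [mem_filter] at hp1 hp2
    omega
  rw [h2, Finset.sum_union h3]
  have h4 : ∑ p ∈ Finset.univ.filter (fun p : Fin m × Fin m => p.1 = p.2), s p.1 * s p.2 =
      ∑ i : Fin m, s i ^ 2 := by
    refine Finset.sum_nbij' (fun p => p.1) (fun i => (i, i)) ?_ ?_ ?_ ?_ ?_ <;>
      simp_all [sq, Prod.ext_iff]
  have h5 : ∑ p ∈ Finset.univ.filter (fun p : Fin m × Fin m => p.2 < p.1), s p.1 * s p.2 =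
      ∑ p ∈ Finset.univ.filter (fun p : Fin m × Fin m => p.1 < p.2), s p.1 * s p.2 := by
    refine Finset.sum_nbij' Prod.swap Prod.swap ?_ ?_ ?_ ?_ ?_ <;> simp [mul_comm]
  rw [h4, h5]
  ring

/-- Let `G` be a finite tree on `N` vertices, `v` a vertex, and let `s 0, …, s (m-1)` be the
cardinalities of the connected components of the subgraph induced on the complement of `{v}`.
Then the number of unordered pairs `{u, w}` of distinct vertices such that `v` lies on the
unique path from `u` to `w` (pairs with `u = v` or `w = v` included) equals
`∑_{i<j} s i * s j + (N - 1)`, where `∑_{i<j} s i * s j = ((N-1)² - ∑ i, (s i)²)/2`. -/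
theorem traffic_through_vertex_eq {V : Type*} [Fintype V] [DecidableEq V]
    (G : SimpleGraph V) (hG : G.IsTree) (v : V)
    (m : ℕ) (s : Fin m → ℕ)
    (e : (G.induce ({v}ᶜ : Set V)).ConnectedComponent ≃ Fin m)
    (hs : ∀ c : (G.induce ({v}ᶜ : Set V)).ConnectedComponent, s (e c) = Nat.card c.supp) :
    Set.ncard {S : Finset V | S.card = 2 ∧
        ∃ u ∈ S, ∃ w ∈ S, u ≠ w ∧ ∀ p : G.Path u w, v ∈ p.val.support} =
      (∑ p ∈ Finset.univ.filter (fun p : Fin m × Fin m => p.1 < p.2), s p.1 * s p.2) +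
        (Fintype.card V - 1) ∧
    (∑ p ∈ Finset.univ.filter (fun p : Fin m × Fin m => p.1 < p.2), s p.1 * s p.2) =
      ((Fintype.card V - 1) ^ 2 - ∑ i : Fin m, s i ^ 2) / 2 := by
  classical
  set f : ({v}ᶜ : Set V) → Fin m :=
    fun x => e ((G.induce ({v}ᶜ : Set V)).connectedComponentMk x) with hf
  set fib : Fin m → Finset V :=
    fun i => univ.filter (fun x => ∃ h : x ∈ ({v}ᶜ : Set V), f ⟨x, h⟩ = i) with hfibdef
  have hfib_mem : ∀ i x, x ∈ fib i ↔ ∃ h : x ∈ ({v}ᶜ : Set V), f ⟨x, h⟩ = i := by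
    intro i x; simp [hfibdef]
  -- cardinality of fibers
  have hcard_fib : ∀ i, (fib i).card = s i := by
    intro i
    have h1 : s i = Nat.card (e.symm i).supp := by
      have := hs (e.symm i); rwa [Equiv.apply_symm_apply] at this
    rw [h1, Nat.card_coe_set_eq, Set.ncard_eq_toFinset_card']
    refine (Finset.card_nbij Subtype.val ?_ ?_ ?_).symm
    · intro x hx
      simp only [Set.mem_toFinset, Finset.mem_coe, SimpleGraph.ConnectedComponent.mem_supp_iff] at hx
      rw [Finset.mem_coe, hfib_mem]
      exact ⟨x.2, by rw [hf]; simp only; rw [hx, Equiv.apply_symm_apply]⟩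
    · intro x _ y _ hxy; exact Subtype.ext hxy
    · intro x hx
      rw [Finset.mem_coe, hfib_mem] at hx
      obtain ⟨h, hfx⟩ := hx
      refine ⟨⟨x, h⟩, ?_, rfl⟩
      simp only [Finset.mem_coe, Set.mem_toFinset, SimpleGraph.ConnectedComponent.mem_supp_iff]
      rw [← hfx]; simp [hf]
  have hdisj : ∀ i j : Fin m, i ≠ j → Disjoint (fib i) (fib j) := by
    intro i j hij
    rw [Finset.disjoint_left]
    intro x hxi hxj
    rw [hfib_mem] at hxi hxj
    obtain ⟨h1, hf1⟩ := hxi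
    obtain ⟨h2, hf2⟩ := hxj
    exact hij (hf1 ▸ hf2 ▸ rfl)
  have hunion : Finset.univ.biUnion fib = Finset.univ.erase v := by
    ext x
    simp only [Finset.mem_biUnion, Finset.mem_univ, true_and, Finset.mem_erase, and_true]
    constructor
    · rintro ⟨i, hi⟩
      rw [hfib_mem] at hi
      obtain ⟨h, -⟩ := hi
      exact Set.mem_compl_singleton_iff.mp h
    · intro hx
      have h : x ∈ ({v}ᶜ : Set V) := Set.mem_compl_singleton_iff.mpr hx
      exact ⟨f ⟨x, h⟩, (hfib_mem _ _).mpr ⟨h, rfl⟩⟩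
  have hsum : ∑ i : Fin m, s i = Fintype.card V - 1 := by
    have := Finset.card_biUnion (s := (univ : Finset (Fin m))) (t := fib) (fun i _ j _ hij => hdisj i j hij)
    rw [hunion, Finset.card_erase_of_mem (Finset.mem_univ v), Finset.card_univ] at this
    rw [this]
    exact Finset.sum_congr rfl fun i _ => (hcard_fib i).symm
  -- the key equivalence
  have key : ∀ (u w : V) (hu : u ∈ ({v}ᶜ : Set V)) (hw : w ∈ ({v}ᶜ : Set V)),
      f ⟨u, hu⟩ = f ⟨w, hw⟩ ↔ (G.induce ({v}ᶜ : Set V)).Reachable ⟨u, hu⟩ ⟨w, hw⟩ := by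
    intro u w hu hw
    rw [hf]
    simp only
    rw [e.apply_eq_iff_eq, SimpleGraph.ConnectedComponent.eq]
  set A : Finset (Finset V) := (univ.erase v).image (fun u => ({v, u} : Finset V)) with hAdef
  set B : Finset (Finset V) :=
    ((Finset.univ.filter (fun p : Fin m × Fin m => p.1 < p.2)).sigma
      (fun p => fib p.1 ×ˢ fib p.2)).image (fun q => ({q.2.1, q.2.2} : Finset V)) with hBdef
  have hA : A.card = Fintype.card V - 1 := by
    rw [hAdef, Finset.card_image_of_injOn, Finset.card_erase_of_mem (Finset.mem_univ v),
      Finset.card_univ]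
    intro a ha b hb hab
    simp only [Finset.mem_coe, Finset.mem_erase] at ha hb
    have hab' : ({v, a} : Finset V) = {v, b} := hab
    have : a ∈ ({v, b} : Finset V) := hab' ▸ Finset.mem_insert_of_mem (Finset.mem_singleton_self a)
    simp only [Finset.mem_insert, Finset.mem_singleton] at this
    tauto
  have hB : B.card =
      ∑ p ∈ Finset.univ.filter (fun p : Fin m × Fin m => p.1 < p.2), s p.1 * s p.2 := by
    rw [hBdef, Finset.card_image_of_injOn, Finset.card_sigma]
    · exact Finset.sum_congr rfl fun p _ => by
        rw [Finset.card_product, hcard_fib, hcard_fib]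
    · rintro ⟨p, a, b⟩ hq ⟨p', a', b'⟩ hq' hab
      simp only [Finset.coe_sigma, Set.mem_sigma_iff, Finset.mem_coe, Finset.mem_filter,
        Finset.mem_univ, true_and, Finset.mem_product] at hq hq'
      have hp := hq.1
      have ha := hq.2.1
      have hb := hq.2.2
      have hp' := hq'.1
      have ha' := hq'.2.1
      have hb' := hq'.2.2
      have hfibeq : ∀ i j x, x ∈ fib i → x ∈ fib j → i = j := by
        intro i j x hi hj
        by_contra hij
        exact (Finset.disjoint_left.mp (hdisj i j hij) hi) hj
      have hab1 : ({a, b} : Finset V) = {a', b'} := hab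
      have hpair : (a = a' ∧ b = b') ∨ (a = b' ∧ b = a') := by
        have ha1 : a ∈ ({a', b'} : Finset V) := hab1 ▸ Finset.mem_insert_self a {b}
        have hb1 : b ∈ ({a', b'} : Finset V) := hab1 ▸ Finset.mem_insert_of_mem (Finset.mem_singleton_self b)
        have ha2 : a' ∈ ({a, b} : Finset V) := hab1.symm ▸ Finset.mem_insert_self a' {b'}
        have hb2 : b' ∈ ({a, b} : Finset V) := hab1.symm ▸ Finset.mem_insert_of_mem (Finset.mem_singleton_self b')
        simp only [Finset.mem_insert, Finset.mem_singleton] at ha1 hb1 ha2 hb2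
        rcases ha1 with h1 | h1 <;> rcases hb1 with h2 | h2 <;> tauto
      rcases hpair with ⟨h1, h2⟩ | ⟨h1, h2⟩
      · subst h1; subst h2
        have e1 : p.1 = p'.1 := hfibeq _ _ _ ha ha'
        have e2 : p.2 = p'.2 := hfibeq _ _ _ hb hb'
        have : p = p' := Prod.ext e1 e2
        subst this
        rfl
      · subst h1; subst h2
        have e1 : p.1 = p'.2 := hfibeq _ _ _ ha hb'
        have e2 : p.2 = p'.1 := hfibeq _ _ _ hb ha'
        exfalso
        rw [e1] at hp
        rw [e2] at hp
        exact absurd (hp.trans hp') (lt_irrefl _)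
  have hAB : Disjoint A B := by
    rw [Finset.disjoint_left]
    intro S hSA hSB
    rw [hAdef, Finset.mem_image] at hSA
    rw [hBdef, Finset.mem_image] at hSB
    obtain ⟨u, hu, rfl⟩ := hSA
    obtain ⟨⟨p, a, b⟩, hq, habS⟩ := hSB
    simp only [Finset.mem_sigma, Finset.mem_filter, Finset.mem_univ, true_and,
      Finset.mem_product] at hq
    have habS' : ({a, b} : Finset V) = {v, u} := habS
    have hva : v ∈ ({a, b} : Finset V) := habS' ▸ Finset.mem_insert_self v {u}
    simp only [Finset.mem_insert, Finset.mem_singleton] at hva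
    rcases hva with rfl | rfl
    · obtain ⟨h, -⟩ := (hfib_mem _ _).mp hq.2.1
      exact h rfl
    · obtain ⟨h, -⟩ := (hfib_mem _ _).mp hq.2.2
      exact h rfl
  have hM : {S : Finset V | S.card = 2 ∧
      ∃ u ∈ S, ∃ w ∈ S, u ≠ w ∧ ∀ p : G.Path u w, v ∈ p.val.support} = ↑(B ∪ A) := by
    ext S
    simp only [Set.mem_setOf_eq, Finset.coe_union, Set.mem_union, Finset.mem_coe]
    constructor
    · rintro ⟨hcard, u, hu, w, hw, huw, hall⟩
      have hSuw : ({u, w} : Finset V) = S := by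
        apply Finset.eq_of_subset_of_card_le
        · intro x hx
          simp only [Finset.mem_insert, Finset.mem_singleton] at hx
          rcases hx with rfl | rfl <;> assumption
        · rw [hcard, Finset.card_pair huw]
      by_cases hv : v ∈ S
      · right
        rw [hAdef, Finset.mem_image]
        rw [← hSuw] at hv
        simp only [Finset.mem_insert, Finset.mem_singleton] at hv
        rcases hv with rfl | rfl
        · exact ⟨w, Finset.mem_erase.mpr ⟨huw.symm, Finset.mem_univ w⟩, hSuw⟩
        · exact ⟨u, Finset.mem_erase.mpr ⟨huw, Finset.mem_univ u⟩,
            by rw [Finset.pair_comm] at hSuw; exact hSuw⟩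
      · left
        have hu' : u ∈ ({v}ᶜ : Set V) :=
          Set.mem_compl_singleton_iff.mpr (fun h => hv (h ▸ hu))
        have hw' : w ∈ ({v}ᶜ : Set V) :=
          Set.mem_compl_singleton_iff.mpr (fun h => hv (h ▸ hw))
        have hne : f ⟨u, hu'⟩ ≠ f ⟨w, hw'⟩ := by
          intro heq
          obtain ⟨q, hq⟩ := reach_of_induce ((key u w hu' hw').mp heq)
          exact hq (hall q)
        rw [hBdef, Finset.mem_image]
        rcases lt_or_gt_of_ne hne with hlt | hlt
        · refine ⟨⟨(f ⟨u, hu'⟩, f ⟨w, hw'⟩), (u, w)⟩, ?_, hSuw⟩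
          simp only [Finset.mem_sigma, Finset.mem_filter, Finset.mem_univ, true_and,
            Finset.mem_product]
          exact ⟨hlt, (hfib_mem _ _).mpr ⟨hu', rfl⟩, (hfib_mem _ _).mpr ⟨hw', rfl⟩⟩
        · refine ⟨⟨(f ⟨w, hw'⟩, f ⟨u, hu'⟩), (w, u)⟩, ?_,
            by rw [Finset.pair_comm] at hSuw; exact hSuw⟩
          simp only [Finset.mem_sigma, Finset.mem_filter, Finset.mem_univ, true_and,
            Finset.mem_product]
          exact ⟨hlt, (hfib_mem _ _).mpr ⟨hw', rfl⟩, (hfib_mem _ _).mpr ⟨hu', rfl⟩⟩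
    · rintro (hS | hS)
      · rw [hBdef, Finset.mem_image] at hS
        obtain ⟨⟨p, a, b⟩, hq, rfl⟩ := hS
        simp only [Finset.mem_sigma, Finset.mem_filter, Finset.mem_univ, true_and,
          Finset.mem_product] at hq
        obtain ⟨hplt, haf, hbf⟩ := hq
        obtain ⟨ha', hfa⟩ := (hfib_mem _ _).mp haf
        obtain ⟨hb', hfb⟩ := (hfib_mem _ _).mp hbf
        have hab : a ≠ b := by
          rintro rfl
          have : p.1 = p.2 := by rw [← hfa, ← hfb]
          omega
        refine ⟨Finset.card_pair hab, a, Finset.mem_insert_self _ _, b,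
          Finset.mem_insert_of_mem (Finset.mem_singleton_self b), hab, ?_⟩
        intro pth
        by_contra hvmem
        have hsupp : ∀ x ∈ pth.val.support, x ∈ ({v}ᶜ : Set V) := fun x hx =>
          Set.mem_compl_singleton_iff.mpr (fun h => hvmem (h ▸ hx))
        have hreach := walk_toInduce pth.val hsupp
        have hfeq := (key a b ha' hb').mpr hreach
        rw [hfa, hfb] at hfeq
        exact absurd hfeq (ne_of_lt hplt)
      · rw [hAdef, Finset.mem_image] at hS
        obtain ⟨u, hu, rfl⟩ := hS
        have huv : u ≠ v := (Finset.mem_erase.mp hu).1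
        exact ⟨Finset.card_pair (Ne.symm huv), v, Finset.mem_insert_self _ _, u,
          Finset.mem_insert_of_mem (Finset.mem_singleton_self u), Ne.symm huv,
          fun p => p.val.start_mem_support⟩
  constructor
  · rw [hM, Set.ncard_coe_finset, Finset.card_union_of_disjoint hAB.symm, hA, hB]
  · rw [← hsum]
    have := sq_sum_aux s
    omega
end

section
/- With the above notation, define for n ≥ l+1 the quantity L_n = (N(n) − 1 − c_n)·c_n + (k_{l+1}(k_{l+1}−1)/2)·(c_n/k_{l+1})² + (N(n) − 1). Then 2·L_n / (N(n)·(N(n)−1)) → (1/β(l))·(2 − 1/β(l) − 1/β(l+1)) as n → ∞. -/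
open Finset Filter

namespace TreeTraffic

/-- `c k l n = (∑_{j=l+1}^n beta k j) / beta k l`, an integer since
`beta k l` divides `beta k j` for every `j > l`. -/
def c (k : ℕ → ℕ) (l n : ℕ) : ℕ := (∑ j ∈ Finset.Icc (l + 1) n, beta k j) / beta k l

set_option maxHeartbeats 1000000 in
/-- With `L_n = (N(n) - 1 - c_n) c_n + (k_{l+1}(k_{l+1}-1)/2)(c_n/k_{l+1})² + (N(n) - 1)`,
we have `2 L_n / (N(n) (N(n)-1)) → (1/β(l)) (2 - 1/β(l) - 1/β(l+1))` as `n → ∞`. -/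
theorem traffic_formula_tendsto (k : ℕ → ℕ) (hk : ∀ i, 1 ≤ k i) (l : ℕ)
    (L : ℕ → ℝ)
    (hL : ∀ n, l + 1 ≤ n →
      L n = ((Ncard k n : ℝ) - 1 - (c k l n : ℝ)) * (c k l n : ℝ) +
        ((k (l + 1) : ℝ) * ((k (l + 1) : ℝ) - 1) / 2) *
          ((c k l n : ℝ) / (k (l + 1) : ℝ)) ^ 2 +
        ((Ncard k n : ℝ) - 1)) :
    Tendsto
      (fun n => 2 * L n / ((Ncard k n : ℝ) * ((Ncard k n : ℝ) - 1))) atTop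
      (nhds ((1 / (beta k l : ℝ)) *
        (2 - 1 / (beta k l : ℝ) - 1 / (beta k (l + 1) : ℝ)))) := by
  -- notation
  set S : ℕ → ℕ := fun n => ∑ j ∈ Finset.Icc (l + 1) n, beta k j with hS
  set B : ℝ := (beta k l : ℝ) with hB
  set K : ℝ := (k (l + 1) : ℝ) with hK
  set A : ℝ := (Ncard k l : ℝ) with hA
  have hbeta_pos : ∀ j, 1 ≤ beta k j := fun j =>
    Finset.one_le_prod' (fun i _ => hk (i + 1))
  have hBpos : (0 : ℝ) < B := by
    have := hbeta_pos l; rw [hB]; exact_mod_cast this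
  have hKpos : (0 : ℝ) < K := by
    have := hk (l + 1); rw [hK]; exact_mod_cast this
  have hApos : (1 : ℝ) ≤ A := by
    have : 1 ≤ Ncard k l := le_trans (hbeta_pos 0)
      (Finset.single_le_sum (f := fun j => beta k j) (fun i _ => Nat.zero_le _)
        (by simp : 0 ∈ Finset.range (l + 1)))
    rw [hA]; exact_mod_cast this
  have hdvd : ∀ n, beta k l ∣ S n := by
    intro n
    apply Finset.dvd_sum
    intro j hj
    have hjl : l ≤ j := by
      have := (Finset.mem_Icc.mp hj).1; omega
    exact Finset.prod_dvd_prod_of_subset _ _ _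
      (Finset.range_subset_range.mpr hjl)
  have hBne : beta k l ≠ 0 := by have := hbeta_pos l; omega
  have hc : ∀ n, (c k l n : ℝ) = (S n : ℝ) / B := by
    intro n
    rw [hB, c]
    exact_mod_cast Nat.cast_div (hdvd n) (by exact_mod_cast hBne)
  have hNn : ∀ n, l ≤ n → (Ncard k n : ℝ) = A + (S n : ℝ) := by
    intro n hn
    have : Ncard k n = Ncard k l + S n := by
      show Ncard k n = Ncard k l + ∑ j ∈ Finset.Icc (l + 1) n, beta k j
      rw [Ncard, Ncard, ← Finset.Ico_add_one_right_eq_Icc]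
      exact (Finset.sum_range_add_sum_Ico _ (by omega)).symm
    rw [hA]; exact_mod_cast this
  have hSge : ∀ n, n - l ≤ S n := by
    intro n
    calc n - l = (Finset.Icc (l + 1) n).card • 1 := by
          simp [Nat.card_Icc]
      _ ≤ S n := Finset.card_nsmul_le_sum _ _ _ (fun j _ => hbeta_pos j)
  have hStop : Tendsto (fun n => ((S n : ℕ) : ℝ)) atTop atTop := by
    apply tendsto_natCast_atTop_atTop.comp
    exact tendsto_atTop_mono hSge (tendsto_sub_atTop_nat l)
  have hu : Tendsto (fun n => ((S n : ℝ))⁻¹) atTop (nhds 0) :=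
    tendsto_inv_atTop_zero.comp hStop
  -- the limit function of u = 1/S n
  set G : ℝ → ℝ := fun u =>
    2 * (((A - 1) * u + 1 - 1 / B) * (1 / B) + (K * (K - 1) / 2) * (1 / (B * K)) ^ 2
        + (A - 1) * u ^ 2 + u) / ((A * u + 1) * ((A - 1) * u + 1)) with hG
  have hGcont : ContinuousAt G 0 := by
    apply ContinuousAt.div
    · fun_prop
    · fun_prop
    · norm_num
  have hGtend : Tendsto (fun n => G ((S n : ℝ))⁻¹) atTop (nhds (G 0)) :=
    hGcont.tendsto.comp hu
  have hG0 : G 0 = (1 / (beta k l : ℝ)) *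
      (2 - 1 / (beta k l : ℝ) - 1 / (beta k (l + 1) : ℝ)) := by
    have hbl1 : (beta k (l + 1) : ℝ) = B * K := by
      rw [hB, hK, beta, beta, Finset.prod_range_succ]; push_cast; ring
    rw [hG, hbl1, ← hB]
    field_simp
    ring
  rw [← hG0]
  apply hGtend.congr'
  filter_upwards [eventually_ge_atTop (l + 1)] with n hn
  have hs1 : (1 : ℝ) ≤ (S n : ℝ) := by
    have : 1 ≤ S n := le_trans (by omega) (hSge n)
    exact_mod_cast this
  have hspos : (0 : ℝ) < (S n : ℝ) := lt_of_lt_of_le one_pos hs1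
  have hNeq := hNn n (by omega)
  have hceq := hc n
  rw [hL n hn, hNeq, hceq, hG]
  have h1 : A * ((S n : ℝ))⁻¹ + 1 ≠ 0 := by positivity
  have h2 : (A - 1) * ((S n : ℝ))⁻¹ + 1 ≠ 0 := by
    have : (0:ℝ) ≤ (A - 1) * ((S n : ℝ))⁻¹ := by
      apply mul_nonneg (by linarith) (by positivity)
    positivity
  have h3 : A + (S n : ℝ) ≠ 0 := by positivity
  have h4 : A + (S n : ℝ) - 1 ≠ 0 := by nlinarith
  show _ / _ = _ / _
  rw [div_eq_div_iff (mul_ne_zero h1 h2) (mul_ne_zero h3 h4)]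
  field_simp
  ring

end TreeTraffic
end

section
/- Let μ be a purely atomic Borel probability measure on a separable metric space X, i.e., there is a countable set A ⊆ X with μ(X \ A) = 0. Let E assign to each x ∈ X a Borel set E(x) ⊆ X with x ∉ E(x), and assume the function x ↦ μ(E(x)) is measurable. Then ∫ μ(E(x)) dμ(x) ≤ 1 − ∑_{a ∈ A} μ({a})² < 1. -/
open MeasureTheory
open scoped ENNReal

/-- Let `μ` be a purely atomic Borel probability measure on a separable metric space
(`A` countable with `μ(X \ A) = 0`), and let `E` assign to each `x` a Borel set `E x` with
`x ∉ E x`, such that `x ↦ μ (E x)` is measurable.  Then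
`∫ μ(E x) dμ(x) ≤ 1 - ∑_{a ∈ A} μ({a})² < 1`. -/
theorem lintegral_avoiding_le_of_purely_atomic {X : Type*} [MetricSpace X]
    [TopologicalSpace.SeparableSpace X] [MeasurableSpace X] [BorelSpace X]
    (μ : Measure X) [IsProbabilityMeasure μ]
    (A : Set X) (hA : A.Countable) (hAc : μ Aᶜ = 0)
    (E : X → Set X) (hE : ∀ x, MeasurableSet (E x)) (hxE : ∀ x, x ∉ E x)
    (hmeas : Measurable fun x => μ (E x)) :
    (∫⁻ x, μ (E x) ∂μ ≤ 1 - ∑' a : A, μ {(a : X)} ^ 2) ∧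
    (1 - ∑' a : A, μ {(a : X)} ^ 2 < 1) := by
  have hAmem : ∀ᵐ x ∂μ, x ∈ A := by
    rw [ae_iff]
    exact hAc
  have hrestr : μ.restrict A = μ := Measure.restrict_eq_self_of_ae_mem hAmem
  -- ∫ μ{x} dμ = ∑ μ{a}²
  have hsum : ∫⁻ x, μ {x} ∂μ = ∑' a : A, μ {(a : X)} ^ 2 := by
    have h1 : ∫⁻ x, μ {x} ∂μ = ∫⁻ x in A, μ {x} ∂μ := by rw [hrestr]
    rw [h1, lintegral_countable _ hA]
    exact tsum_congr fun a => (sq (μ {(a : X)})).symm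
  -- pointwise estimate
  have hpt : ∀ x, μ (E x) + μ {x} ≤ 1 := by
    intro x
    rw [← measure_union (Set.disjoint_singleton_right.mpr (hxE x)) (measurableSet_singleton x)]
    exact prob_le_one
  have hkey : ∫⁻ x, μ (E x) ∂μ + ∑' a : A, μ {(a : X)} ^ 2 ≤ 1 := by
    rw [← hsum, ← lintegral_add_left hmeas]
    calc ∫⁻ x, (μ (E x) + μ {x}) ∂μ ≤ ∫⁻ _, (1 : ℝ≥0∞) ∂μ := lintegral_mono fun x => hpt x
      _ = 1 := by simp
  have hsum_le : ∑' a : A, μ {(a : X)} ^ 2 ≤ 1 := le_trans (le_add_self) hkey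
  refine ⟨ENNReal.le_sub_of_add_le_right (ne_top_of_le_ne_top ENNReal.one_ne_top hsum_le) hkey, ?_⟩
  -- positivity of the sum
  have hpos : ∑' a : A, μ {(a : X)} ^ 2 ≠ 0 := by
    intro h0
    have hall : ∀ a : A, μ {(a : X)} = 0 := by
      intro a
      have := (ENNReal.tsum_eq_zero.mp h0) a
      simpa [pow_eq_zero_iff] using this
    have hA0 : μ A = 0 := by
      have : μ A ≤ ∑' a : A, μ {(a : X)} := by
        have := measure_biUnion_le μ hA (fun a => ({a} : Set X))
        simpa [Set.biUnion_of_singleton] using this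
      simpa [hall] using this
    have : μ Set.univ = 0 := by
      have := measure_union_le A Aᶜ (μ := μ)
      simp only [hA0, hAc, add_zero, Set.union_compl_self] at this
      exact le_antisymm this (zero_le)
    simp [measure_univ] at this
  exact ENNReal.sub_lt_self ENNReal.one_ne_top one_ne_zero hpos
end

section
/- Let i denote the point of the upper half-plane corresponding to the complex number i. For every a > 0 and every point z of the upper half-plane whose complex absolute value equals a, the hyperbolic distance satisfies dist(i, z) ≥ |log a|, and equality holds for the point z = a·i. (Thus the hyperbolic distance from i to the geodesic {z : |z| = a} joining the boundary points −a and a equals |log a|.) -/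
open Real

lemma cosh_dist_I_eq (a : ℝ) (ha : 0 < a) (z : UpperHalfPlane)
    (hz : ‖(z : ℂ)‖ = a) :
    Real.cosh (dist UpperHalfPlane.I z) = (a ^ 2 + 1) / (2 * z.im) := by
  have hy : 0 < z.im := z.im_pos
  have ha2 : a ^ 2 = z.re ^ 2 + z.im ^ 2 := by
    rw [← hz, Complex.sq_norm, Complex.normSq_apply]
    simp [UpperHalfPlane.coe_re, UpperHalfPlane.coe_im, sq]
  have hd2 : dist (UpperHalfPlane.I : ℂ) (z : ℂ) ^ 2 = a ^ 2 + 1 - 2 * z.im := by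
    rw [Complex.dist_eq, Complex.sq_norm, Complex.normSq_apply, ha2]
    simp [UpperHalfPlane.coe_I, UpperHalfPlane.coe_re, UpperHalfPlane.coe_im]
    ring
  rw [UpperHalfPlane.cosh_dist, hd2]
  have : (UpperHalfPlane.I).im = 1 := rfl
  rw [this]
  field_simp
  ring

/-- In the upper half-plane with its hyperbolic metric, for every `a > 0` and every point `z`
with `|z| = a`, the distance from `i` satisfies `dist(i, z) ≥ |log a|`, with equality at the
point `z = a i`.  Thus the hyperbolic distance from `i` to the geodesic `{z : |z| = a}`
joining the boundary points `-a` and `a` equals `|log a|`. -/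
theorem dist_I_to_semicircle (a : ℝ) (ha : 0 < a) :
    (∀ z : UpperHalfPlane, ‖(z : ℂ)‖ = a →
      |Real.log a| ≤ dist UpperHalfPlane.I z) ∧
    (∃ z : UpperHalfPlane, (z : ℂ) = (a : ℂ) * Complex.I ∧
      dist UpperHalfPlane.I z = |Real.log a|) := by
  have hcl : Real.cosh (Real.log a) = (a ^ 2 + 1) / (2 * a) := by
    rw [Real.cosh_log ha]
    field_simp
  constructor
  · intro z hz
    have hy : 0 < z.im := z.im_pos
    have hya : z.im ≤ a := by
      rw [← hz]
      exact (le_abs_self _).trans (Complex.abs_im_le_norm (z : ℂ))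
    have hle : Real.cosh (Real.log a) ≤ Real.cosh (dist UpperHalfPlane.I z) := by
      rw [hcl, cosh_dist_I_eq a ha z hz]
      apply div_le_div_of_nonneg_left (by positivity) (by positivity)
      linarith
    have := Real.cosh_le_cosh.mp hle
    rwa [abs_of_nonneg dist_nonneg] at this
  · refine ⟨⟨(a : ℂ) * Complex.I, by simp [ha]⟩, rfl, ?_⟩
    set z : UpperHalfPlane := ⟨(a : ℂ) * Complex.I, by simp [ha]⟩
    have hz : ‖(z : ℂ)‖ = a := by
      simp [z, Complex.norm_def, Complex.normSq_apply, Real.sqrt_mul_self ha.le, ha.le]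
    have him : z.im = a := by simp [z, UpperHalfPlane.im]
    have hcosh : Real.cosh (dist UpperHalfPlane.I z) = Real.cosh (|Real.log a|) := by
      rw [Real.cosh_abs, hcl, cosh_dist_I_eq a ha z hz, him]
    have h1 : |dist UpperHalfPlane.I z| ≤ |(|Real.log a|)| := Real.cosh_le_cosh.mp hcosh.le
    have h2 : |(|Real.log a|)| ≤ |dist UpperHalfPlane.I z| := Real.cosh_le_cosh.mp hcosh.ge
    have := le_antisymm h1 h2
    rwa [abs_of_nonneg dist_nonneg, abs_abs] at this
end

section
/- Let μ be a Borel probability measure on ℂ supported on the unit circle (μ of the complement of {z : |z| = 1} is 0) and satisfying μ({−i}) = 0. Then for every bounded continuous function f : ℂ → ℝ, ∫ f(φ_t(z)) dμ(z) → f(i) as t → 1 from the left. (That is, the pushforward measures (φ_t)_*μ converge weakly to the Dirac measure at i as t → 1⁻; this is the concentration of the transformed visual measures used to prove that the α-core of a hyperbolic graph is a bounded set.) -/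
open Complex Filter MeasureTheory

/-- Let `μ` be a Borel probability measure on `ℂ` supported on the unit circle and with
`μ({-i}) = 0`.  Then for every bounded continuous `f : ℂ → ℝ`,
`∫ f(φ_t(z)) dμ(z) → f(i)` as `t → 1⁻`, where `φ_t(z) = (z + it)/(1 - itz)`; that is, the
pushforwards `(φ_t)_* μ` converge weakly to the Dirac measure at `i`. -/
theorem mobius_pushforward_tendsto_dirac (μ : Measure ℂ) [IsProbabilityMeasure μ]
    (hcirc : μ ({z : ℂ | ‖z‖ = 1}ᶜ) = 0) (hatom : μ {-Complex.I} = 0) :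
    ∀ f : BoundedContinuousFunction ℂ ℝ,
      Tendsto
        (fun t : ℝ => ∫ z, f ((z + (t : ℂ) * Complex.I) / (1 - (t : ℂ) * Complex.I * z)) ∂μ)
        (nhdsWithin 1 (Set.Ioo (0 : ℝ) 1)) (nhds (f Complex.I)) := by
  intro f
  have hnull : μ ({z : ℂ | ‖z‖ = 1 ∧ z ≠ -Complex.I}ᶜ) = 0 := by
    have hsub : ({z : ℂ | ‖z‖ = 1 ∧ z ≠ -Complex.I}ᶜ) ⊆
        ({z : ℂ | ‖z‖ = 1}ᶜ) ∪ {-Complex.I} := by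
      intro z hz
      simp only [Set.mem_compl_iff, Set.mem_setOf_eq, not_and_or, not_ne_iff] at hz
      rcases hz with h | h
      · exact Or.inl h
      · exact Or.inr h
    exact measure_mono_null hsub (measure_union_null hcirc hatom)
  have key : Tendsto
      (fun t : ℝ => ∫ z, f ((z + (t : ℂ) * Complex.I) / (1 - (t : ℂ) * Complex.I * z)) ∂μ)
      (nhdsWithin 1 (Set.Ioo (0 : ℝ) 1)) (nhds (∫ _z, f Complex.I ∂μ)) := by
    apply tendsto_integral_filter_of_dominated_convergence (fun _ => ‖f‖)
    · filter_upwards with t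
      have hm : Measurable fun z : ℂ =>
          (z + (t : ℂ) * Complex.I) / (1 - (t : ℂ) * Complex.I * z) := by
        exact (measurable_id.add_const _).div
          (measurable_const.sub (measurable_id.const_mul _))
      exact (f.continuous.measurable.comp hm).aestronglyMeasurable
    · filter_upwards with t
      filter_upwards with z using f.norm_coe_le_norm _
    · exact integrable_const _
    · have : ∀ᵐ z ∂μ, ‖z‖ = 1 ∧ z ≠ -Complex.I := by
        rw [ae_iff]
        refine measure_mono_null (fun z hz => ?_) hnull
        exact hz
      filter_upwards [this] with z hz
      obtain ⟨habs, hne⟩ := hz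
      have hden : (1 : ℂ) - Complex.I * z ≠ 0 := by
        intro h
        have h1 : Complex.I * z = 1 := by linear_combination -h
        exact hne (by linear_combination (-Complex.I) * h1 + z * Complex.I_sq)
      have hlim : Tendsto
          (fun t : ℝ => (z + (t : ℂ) * Complex.I) / (1 - (t : ℂ) * Complex.I * z))
          (nhdsWithin 1 (Set.Ioo (0 : ℝ) 1)) (nhds ((z + Complex.I) / (1 - Complex.I * z))) := by
        apply Tendsto.mono_left _ nhdsWithin_le_nhds
        have hc1 : Continuous fun t : ℝ => z + (t : ℂ) * Complex.I :=
          continuous_const.add (continuous_ofReal.mul continuous_const)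
        have hc2 : Continuous fun t : ℝ => (1 : ℂ) - (t : ℂ) * Complex.I * z :=
          continuous_const.sub ((continuous_ofReal.mul continuous_const).mul continuous_const)
        have h1 : Tendsto (fun t : ℝ => (z + (t : ℂ) * Complex.I))
            (nhds 1) (nhds (z + Complex.I)) := by
          simpa using hc1.tendsto 1
        have h2 : Tendsto (fun t : ℝ => (1 - (t : ℂ) * Complex.I * z))
            (nhds 1) (nhds (1 - Complex.I * z)) := by
          simpa using hc2.tendsto 1
        exact h1.div h2 hden
      have heq : (z + Complex.I) / (1 - Complex.I * z) = Complex.I := by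
        rw [div_eq_iff hden]
        linear_combination z * Complex.I_sq
      rw [heq] at hlim
      exact (f.continuous.tendsto _).comp hlim
  have : (∫ _z, f Complex.I ∂μ) = f Complex.I := by
    simp [integral_const]
  rwa [this] at key
end
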